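/- For every set-system hypergraph G, the quivers R⃗(N_R(C(G))) and D⃗(del(N★(G))) are naturally isomorphic, where C converts G to an incidence structure, N_R views it as an incidence hypergraph, R⃗ is directed clique replacement, N★ is simplicial replacement, del deletes nontraditional edges, and D⃗ is the associated digraph construction. -/

import Mathlib

/-- A set-system hypergraph. -/
structure SSHyp : Type 1 where
  E : Type
  V : Type
  eps : E → Set V

/-- A weak set-system hypergraph homomorphism. -/
structure WeakHom (G H : SSHyp) where
  fe : G.E → H.E
  fv : G.V → H.V
  sub : ∀ e, fv '' G.eps e ⊆ H.eps (fe e)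

/-- A quiver. -/
structure Quiv : Type 1 where
  V : Type
  E : Type
  s : E → V
  t : E → V

/-- A quiver homomorphism. -/
structure QuivHom (Q Q' : Quiv) where
  fv : Q.V → Q'.V
  fe : Q.E → Q'.E
  hs : ∀ e, Q'.s (fe e) = fv (Q.s e)
  ht : ∀ e, Q'.t (fe e) = fv (Q.t e)

/-- Composition of quiver homomorphisms. -/
def QuivHom.comp {A B C : Quiv} (φ : QuivHom A B) (ψ : QuivHom B C) : QuivHom A C :=
  ⟨ψ.fv ∘ φ.fv, ψ.fe ∘ φ.fe,
    fun e => by simp [ψ.hs, φ.hs], fun e => by simp [ψ.ht, φ.ht]⟩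

/-- An incidence structure. -/
structure IStr : Type 1 where
  V : Type
  E : Type
  I : Set (V × E)

/-- An incidence hypergraph. -/
structure IncHyp : Type 1 where
  V : Type
  E : Type
  I : Type
  port : I → V
  att : I → E

/-- `C`: the incidence structure of a set-system hypergraph. -/
def Cmap (G : SSHyp) : IStr :=
  ⟨G.V, G.E, {p | p.1 ∈ G.eps p.2}⟩

/-- `N_R`: an incidence structure viewed as an incidence hypergraph. -/
def NR (S : IStr) : IncHyp :=
  ⟨S.V, S.E, {p : S.V × S.E // p ∈ S.I}, fun j => j.val.1, fun j => j.val.2⟩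

/-- `R⃗`: the directed clique replacement quiver of an incidence hypergraph. -/
def Rvec (G : IncHyp) : Quiv :=
  ⟨G.V, {p : G.I × G.I // G.att p.1 = G.att p.2},
    fun p => G.port p.val.1, fun p => G.port p.val.2⟩

/-- `N★`: simplicial replacement of a set-system hypergraph. -/
def Nstar (G : SSHyp) : SSHyp :=
  ⟨{p : G.E × Set G.V // p.2 ⊆ G.eps p.1}, G.V, fun p => p.val.2⟩

/-- `del`: deletion of all edges not of cardinality 1 or 2. -/
def delM (M : SSHyp) : SSHyp :=
  ⟨{e : M.E // ∃ v w, M.eps e = {v, w}}, M.V, fun e => M.eps e.val⟩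

/-- `D⃗`: the associated digraph (quiver) of a multigraph. -/
def Dvec (M : SSHyp) : Quiv :=
  ⟨M.V, {q : M.E × M.V × M.V // M.eps q.1 = {q.2.1, q.2.2}},
    fun q => q.val.2.1, fun q => q.val.2.2⟩

/-- The composite `R⃗ ∘ N_R ∘ C` on objects. -/
def Aobj (G : SSHyp) : Quiv := Rvec (NR (Cmap G))

/-- The composite `R⃗ ∘ N_R ∘ C` on weak homomorphisms. -/
def Ahom {G H : SSHyp} (φ : WeakHom G H) : QuivHom (Aobj G) (Aobj H) where
  fv := φ.fv
  fe := fun p =>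
    ⟨(⟨(φ.fv p.val.1.val.1, φ.fe p.val.1.val.2),
        φ.sub _ ⟨p.val.1.val.1, p.val.1.property, rfl⟩⟩,
      ⟨(φ.fv p.val.2.val.1, φ.fe p.val.2.val.2),
        φ.sub _ ⟨p.val.2.val.1, p.val.2.property, rfl⟩⟩),
      congrArg φ.fe p.property⟩
  hs := fun e => rfl
  ht := fun e => rfl

/-- The composite `D⃗ ∘ del ∘ N★` on objects. -/
def Bobj (G : SSHyp) : Quiv := Dvec (delM (Nstar G))

/-- The composite `D⃗ ∘ del ∘ N★` on weak homomorphisms. -/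
def Bhom {G H : SSHyp} (φ : WeakHom G H) : QuivHom (Bobj G) (Bobj H) where
  fv := φ.fv
  fe := fun q =>
    ⟨(⟨⟨(φ.fe q.val.1.val.val.1, φ.fv '' q.val.1.val.val.2),
          (Set.image_mono q.val.1.val.property).trans (φ.sub _)⟩,
        ⟨φ.fv q.val.2.1, φ.fv q.val.2.2, by
          show φ.fv '' q.val.1.val.val.2 = _
          rw [show (q.val.1.val.val.2 : Set G.V) = {q.val.2.1, q.val.2.2} from q.property]
          exact Set.image_pair _ _ _⟩⟩,
      φ.fv q.val.2.1, φ.fv q.val.2.2), by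
        show φ.fv '' q.val.1.val.val.2 = ({φ.fv q.val.2.1, φ.fv q.val.2.2} : Set H.V)
        rw [show (q.val.1.val.val.2 : Set G.V) = {q.val.2.1, q.val.2.2} from q.property]
        exact Set.image_pair _ _ _⟩
  hs := fun e => rfl
  ht := fun e => rfl

theorem QuivHom.ext' {Q Q' : Quiv} {f g : QuivHom Q Q'}
    (h1 : f.fv = g.fv) (h2 : f.fe = g.fe) : f = g := by
  cases f; cases g; cases h1; cases h2; rfl

/-- The natural isomorphism components. -/
def etaFun (G : SSHyp) : QuivHom (Aobj G) (Bobj G) where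
  fv := id
  fe := fun p =>
    ⟨(⟨⟨(p.val.1.val.2, {p.val.1.val.1, p.val.2.val.1}), by
          rintro x (rfl | rfl)
          · exact p.val.1.property
          · show p.val.2.val.1 ∈ G.eps p.val.1.val.2
            rw [show p.val.1.val.2 = p.val.2.val.2 from p.property]
            exact p.val.2.property⟩,
        ⟨p.val.1.val.1, p.val.2.val.1, rfl⟩⟩,
      p.val.1.val.1, p.val.2.val.1), rfl⟩
  hs := fun e => rfl
  ht := fun e => rfl

/-- The inverse on edges. -/
def etaInv (G : SSHyp) : (Bobj G).E → (Aobj G).E := fun q =>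
  ⟨(⟨(q.val.2.1, q.val.1.val.val.1), q.val.1.val.property
        (by rw [show (q.val.1.val.val.2 : Set G.V) = _ from q.property]
            exact Set.mem_insert _ _)⟩,
    ⟨(q.val.2.2, q.val.1.val.val.1), q.val.1.val.property
        (by rw [show (q.val.1.val.val.2 : Set G.V) = _ from q.property]
            exact Set.mem_insert_iff.2 (Or.inr rfl))⟩), rfl⟩

/-- For every set-system hypergraph `G`, the quivers `R⃗(N_R(C(G)))` and
`D⃗(del(N★(G)))` are isomorphic, naturally in `G` (with respect to weak
homomorphisms): there is a family of quiver homomorphisms `η_G`, bijective on vertices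
and edges, making the naturality squares commute. -/
theorem clique_replacement_coherence :
    ∃ η : ∀ G : SSHyp, QuivHom (Aobj G) (Bobj G),
      (∀ G : SSHyp, Function.Bijective (η G).fv ∧ Function.Bijective (η G).fe) ∧
      (∀ (G H : SSHyp) (φ : WeakHom G H),
        (η G).comp (Bhom φ) = (Ahom φ).comp (η H)) := by
  refine ⟨etaFun, fun G => ⟨Function.bijective_id, ?_⟩, ?_⟩
  · refine Function.bijective_iff_has_inverse.2 ⟨etaInv G, fun p => ?_, fun q => ?_⟩
    · apply Subtype.ext
      apply Prod.ext
      · apply Subtype.ext; rfl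
      · apply Subtype.ext
        apply Prod.ext
        · rfl
        · exact p.property
    · apply Subtype.ext
      apply Prod.ext
      · apply Subtype.ext
        apply Subtype.ext
        apply Prod.ext
        · rfl
        · exact q.property.symm
      · rfl
  · intro G H φ
    apply QuivHom.ext'
    · rfl
    · funext p
      apply Subtype.ext
      apply Prod.ext
      · apply Subtype.ext
        apply Subtype.ext
        apply Prod.ext
        · rfl
        · show φ.fv '' {p.val.1.val.1, p.val.2.val.1} =
            ({φ.fv p.val.1.val.1, φ.fv p.val.2.val.1} : Set H.V)
          exact Set.image_pair _ _ _
      · rfl
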